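/- Let X be an uncountable set and H an RKHS on X with kernel k. If ℓ∞(X) ⊆ H, then for X_n = {x : k(x,x) ≤ n} there is m with X_m uncountable, and every bounded function on X_m belongs to the RKHS H_m of the restricted kernel, with ‖f‖_∞ ≤ √m ‖f‖_{H_m}; by the closed graph theorem the norms ‖·‖_∞ and ‖·‖_{H_m} are equivalent on ℓ∞(X_m). -/

import Mathlib

open scoped BoundedContinuousFunction


open scoped RealInnerProductSpace

/-- If `X` is uncountable and the RKHS `H` on `X` with kernel `k` contains all bounded
functions, then some sublevel set `X_m = {x | k x x ≤ m}` is uncountable, every bounded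
function on `X_m` is the restriction of some `h ∈ H` with `|f x| ≤ √m ‖h‖` on `X_m`,
and by the closed graph theorem the sup norm and the `H_m`-norm are equivalent:
some representative `h` satisfies `‖h‖ ≤ K · sup_{x ∈ X_m} |f x|`. -/
theorem bounded_functions_in_restricted_RKHS
    {X : Type*} (hX : ¬ Countable X)
    (H : Type*) [NormedAddCommGroup H] [InnerProductSpace ℝ H] [CompleteSpace H]
    (ι : H →ₗ[ℝ] (X → ℝ)) (hinj : Function.Injective ι)
    (k : X → X → ℝ) (Φ : X → H)
    (hfeat : ∀ x y : X, ι (Φ x) y = k y x)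
    (hrep : ∀ (h : H) (x : X), ι h x = ⟪h, Φ x⟫)
    (hsub : ∀ f : X → ℝ, (∃ C : ℝ, ∀ x, |f x| ≤ C) → f ∈ Set.range ι) :
    ∃ m : ℕ, ¬ ({x : X | k x x ≤ (m : ℝ)} : Set X).Countable ∧
      ∃ K : ℝ, 0 < K ∧
        ∀ f : X → ℝ, (∃ C : ℝ, ∀ x, |f x| ≤ C) →
          ∃ h : H, (∀ x ∈ {x : X | k x x ≤ (m : ℝ)}, ι h x = f x) ∧
            (∀ x ∈ {x : X | k x x ≤ (m : ℝ)}, |f x| ≤ Real.sqrt m * ‖h‖) ∧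
            ‖h‖ ≤ K * ⨆ x : {x : X | k x x ≤ (m : ℝ)}, |f x| := by
  classical
  -- Step 1: some sublevel set is uncountable
  have hm : ∃ m : ℕ, ¬ ({x : X | k x x ≤ (m : ℝ)} : Set X).Countable := by
    by_contra hc
    push_neg at hc
    apply hX
    have hsub' : (Set.univ : Set X) ⊆ ⋃ m : ℕ, {x : X | k x x ≤ (m : ℝ)} := by
      intro x _
      exact Set.mem_iUnion.2 ⟨⌈k x x⌉₊, show k x x ≤ _ from Nat.le_ceil _⟩
    exact Set.countable_univ_iff.mp ((Set.countable_iUnion hc).mono hsub')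
  obtain ⟨m, hmc⟩ := hm
  refine ⟨m, hmc, ?_⟩
  set s : Set X := {x : X | k x x ≤ (m : ℝ)} with hs
  letI : TopologicalSpace ↥s := ⊥
  haveI : DiscreteTopology ↥s := ⟨rfl⟩
  -- extension of a bounded function on `s` by zero
  let fe : (↥s →ᵇ ℝ) → X → ℝ := fun g x => if hx : x ∈ s then g ⟨x, hx⟩ else 0
  have hfe_bdd : ∀ (g : ↥s →ᵇ ℝ) (x : X), |fe g x| ≤ ‖g‖ := by
    intro g x
    simp only [fe]
    split
    · simpa [Real.norm_eq_abs] using g.norm_coe_le_norm _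
    · simpa using norm_nonneg g
  -- the (unique) representative in `H` of the extension
  let rep : (↥s →ᵇ ℝ) → H := fun g => (hsub (fe g) ⟨‖g‖, hfe_bdd g⟩).choose
  have hrepe : ∀ g : ↥s →ᵇ ℝ, ι (rep g) = fe g :=
    fun g => (hsub (fe g) ⟨‖g‖, hfe_bdd g⟩).choose_spec
  -- the closed subspace generated by the features of points of `s`
  set V : Submodule ℝ H := (Submodule.span ℝ (Φ '' s)).topologicalClosure with hV
  have hVclosed : IsClosed (V : Set H) := Submodule.isClosed_topologicalClosure _
  haveI : CompleteSpace V := hVclosed.completeSpace_coe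
  have hΦV : ∀ x ∈ s, Φ x ∈ V := fun x hx =>
    Submodule.le_topologicalClosure _ (Submodule.subset_span ⟨x, hx, rfl⟩)
  have key : ∀ (h : H) (x : X), x ∈ s →
      ⟪((Submodule.orthogonalProjectionOnto V h : V) : H), Φ x⟫ = ⟪h, Φ x⟫ := by
    intro h x hx
    have h0 := Submodule.starProjection_inner_eq_zero h (Φ x) (hΦV x hx)
    rw [inner_sub_left, Submodule.starProjection_apply] at h0
    linarith
  -- the linear map `ℓ∞(s) → H`
  have hrep_add : ∀ g₁ g₂ : ↥s →ᵇ ℝ, rep (g₁ + g₂) = rep g₁ + rep g₂ := by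
    intro g₁ g₂
    apply hinj
    rw [map_add, hrepe, hrepe, hrepe]
    funext x
    simp only [fe, Pi.add_apply]
    split
    · simp
    · ring
  have hrep_smul : ∀ (c : ℝ) (g : ↥s →ᵇ ℝ), rep (c • g) = c • rep g := by
    intro c g
    apply hinj
    rw [map_smul, hrepe, hrepe]
    funext x
    simp only [fe, Pi.smul_apply, smul_eq_mul]
    split
    · simp
    · ring
  let T : (↥s →ᵇ ℝ) →ₗ[ℝ] H :=
    { toFun := fun g => ((Submodule.orthogonalProjectionOnto V (rep g) : V) : H)
      map_add' := by
        intro g₁ g₂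
        rw [hrep_add, map_add]
        simp
      map_smul' := by
        intro c g
        rw [hrep_smul, map_smul]
        simp }
  have hTV : ∀ g : ↥s →ᵇ ℝ, T g ∈ V := fun g => SetLike.coe_mem _
  have hTeval : ∀ (g : ↥s →ᵇ ℝ) (x : X) (hx : x ∈ s), ι (T g) x = g ⟨x, hx⟩ := by
    intro g x hx
    rw [hrep]
    simp only [T, LinearMap.coe_mk, AddHom.coe_mk]
    rw [key _ x hx, ← hrep, hrepe]
    simp [fe, hx]
  -- closed graph theorem
  have hTcont : Continuous T := by
    apply LinearMap.continuous_of_seq_closed_graph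
    intro u g y hu hy
    have hyV : y ∈ V := hVclosed.mem_of_tendsto hy (Filter.Eventually.of_forall fun n => hTV _)
    have hinner : ∀ (x : X) (hx : x ∈ s), ⟪T g - y, Φ x⟫ = 0 := by
      intro x hx
      have h1 : Filter.Tendsto (fun n => ⟪T (u n), Φ x⟫) Filter.atTop (nhds ⟪y, Φ x⟫) :=
        hy.inner tendsto_const_nhds
      have h2 : ∀ n, ⟪T (u n), Φ x⟫ = (u n) ⟨x, hx⟩ := fun n => by
        rw [← hrep, hTeval]
      have h3 : Filter.Tendsto (fun n => (u n) ⟨x, hx⟩) Filter.atTop (nhds (g ⟨x, hx⟩)) :=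
        ((continuous_eval_const (⟨x, hx⟩ : ↥s)).tendsto g).comp hu
      have h4 : ⟪y, Φ x⟫ = g ⟨x, hx⟩ := tendsto_nhds_unique (by simpa [h2] using h1) h3
      have h5 : ⟪T g, Φ x⟫ = g ⟨x, hx⟩ := by rw [← hrep, hTeval]
      rw [inner_sub_left, h4, h5, sub_self]
    have hdiff : T g - y ∈ V := sub_mem (hTV g) hyV
    have hle : V ≤ (ℝ ∙ (T g - y))ᗮ := by
      apply Submodule.topologicalClosure_minimal
      · rw [Submodule.span_le]
        rintro _ ⟨x, hx, rfl⟩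
        rw [SetLike.mem_coe, Submodule.mem_orthogonal_singleton_iff_inner_right]
        exact hinner x hx
      · exact Submodule.isClosed_orthogonal _
    have hz : ⟪T g - y, T g - y⟫ = 0 :=
      (Submodule.mem_orthogonal _ _).1 (hle hdiff) _ (Submodule.mem_span_singleton_self _)
    have : T g - y = 0 := inner_self_eq_zero.mp hz
    have := sub_eq_zero.mp this
    exact this.symm
  let T' : (↥s →ᵇ ℝ) →L[ℝ] H := ⟨T, hTcont⟩
  refine ⟨‖T'‖ + 1, by positivity, ?_⟩
  intro f hf
  obtain ⟨C, hC⟩ := hf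
  let g : ↥s →ᵇ ℝ :=
    BoundedContinuousFunction.ofNormedAddCommGroup (fun x : ↥s => f ↑x)
      continuous_of_discreteTopology C (fun x => by simpa [Real.norm_eq_abs] using hC ↑x)
  have hgval : ∀ (x : X) (hx : x ∈ s), ι (T g) x = f x := fun x hx => hTeval g x hx
  refine ⟨T g, hgval, ?_, ?_⟩
  · intro x hx
    have hΦn : ‖Φ x‖ ≤ Real.sqrt m := by
      rw [Real.le_sqrt (norm_nonneg _) (by positivity)]
      have h2 : ‖Φ x‖ ^ 2 = k x x := by
        rw [← real_inner_self_eq_norm_sq, ← hrep, hfeat]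
      rw [h2]; exact hx
    calc |f x| = |⟪T g, Φ x⟫| := by rw [← hgval x hx, hrep]
      _ ≤ ‖T g‖ * ‖Φ x‖ := abs_real_inner_le_norm _ _
      _ ≤ ‖T g‖ * Real.sqrt m := by
          exact mul_le_mul_of_nonneg_left hΦn (norm_nonneg _)
      _ = Real.sqrt m * ‖T g‖ := mul_comm _ _
  · have hb : ‖T g‖ ≤ ‖T'‖ * ‖g‖ := T'.le_opNorm g
    have hg : ‖g‖ = ⨆ x : ↥s, |f ↑x| := by
      rw [BoundedContinuousFunction.norm_eq_iSup_norm]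
      simp [g, Real.norm_eq_abs]
    calc ‖T g‖ ≤ ‖T'‖ * ‖g‖ := hb
      _ ≤ (‖T'‖ + 1) * ‖g‖ := by
          have := norm_nonneg g
          nlinarith [norm_nonneg T']
      _ = (‖T'‖ + 1) * ⨆ x : ↥s, |f ↑x| := by rw [hg]
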